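/- Let T be a treegadget with leaf set L ⊆ V(T) and root r. Every 3-coloring c' : L → {1,2,3} that is proper on the induced subgraph T[L] can be extended to a proper 3-coloring c of all of T. Moreover, if there is a leaf v ∈ L with c'(v) = i, then such an extension exists that additionally satisfies c(r) ≠ i. -/

import Mathlib

/-- A complete binary tree: every internal node has exactly two children. -/
inductive BTree : Type
  | leaf : BTree
  | node : BTree → BTree → BTree

/-- The subtree of a binary tree located at a given position (a path of
left/right choices from the root), if that position exists in the tree. -/
def BTree.subtree : BTree → List Bool → Option BTree
  | t, [] => some t
  | .leaf, _ :: _ => none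
  | .node l r, b :: p => (if b then r else l).subtree p

/-- Vertices of the treegadget of `t`: a valid node position of the tree
together with one of the three triangle vertices placed at that node
(`0` is the vertex `r_v`, `1` is `x_v`, `2` is `y_v`). -/
def TGVertex (t : BTree) : Type :=
  {v : List Bool × Fin 3 // (t.subtree v.1).isSome}

/-- The treegadget of a complete binary tree `t`: each node of the tree is
replaced by a triangle `r_v, x_v, y_v`, the vertex `x_v` (resp. `y_v`) is
additionally joined to the vertex `r` of the left (resp. right) child of `v`. -/
def treegadget (t : BTree) : SimpleGraph (TGVertex t) :=
  SimpleGraph.fromRel fun v w =>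
    v.1.1 = w.1.1 ∨
    (w.1.1 = v.1.1 ++ [false] ∧ v.1.2 = 1 ∧ w.1.2 = 0) ∨
    (w.1.1 = v.1.1 ++ [true] ∧ v.1.2 = 2 ∧ w.1.2 = 0)

/-- The root of the treegadget: the vertex `r` of the triangle at the root node. -/
def TGroot (t : BTree) : TGVertex t := ⟨([], 0), by cases t <;> rfl⟩

/-- A leaf of the treegadget: a vertex `x_v` where `v` has no left subtree, or a
vertex `y_v` where `v` has no right subtree. Since the binary tree is complete,
these are exactly the vertices `x_v` and `y_v` at childless nodes `v`. -/
def IsTGLeaf (t : BTree) (v : TGVertex t) : Prop :=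
  t.subtree v.1.1 = some BTree.leaf ∧ v.1.2 ≠ 0

def pushL (l r : BTree) (v : TGVertex l) : TGVertex (BTree.node l r) :=
  ⟨(false :: v.1.1, v.1.2), v.2⟩

def pushR (l r : BTree) (v : TGVertex r) : TGVertex (BTree.node l r) :=
  ⟨(true :: v.1.1, v.1.2), v.2⟩

def mkColor (l r : BTree) (cl : TGVertex l → Fin 3) (cr : TGVertex r → Fin 3)
    (tri : Fin 3 → Fin 3) : TGVertex (BTree.node l r) → Fin 3 :=
  fun v => match v with
  | ⟨([], k), _⟩ => tri k
  | ⟨(false :: p, k), h⟩ => cl ⟨(p, k), h⟩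
  | ⟨(true :: p, k), h⟩ => cr ⟨(p, k), h⟩

lemma tgadj (t : BTree) (v w : TGVertex t) :
    (treegadget t).Adj v w ↔ v.1 ≠ w.1 ∧
      ((v.1.1 = w.1.1 ∨
        (w.1.1 = v.1.1 ++ [false] ∧ v.1.2 = 1 ∧ w.1.2 = 0) ∨
        (w.1.1 = v.1.1 ++ [true] ∧ v.1.2 = 2 ∧ w.1.2 = 0)) ∨
       (w.1.1 = v.1.1 ∨
        (v.1.1 = w.1.1 ++ [false] ∧ w.1.2 = 1 ∧ v.1.2 = 0) ∨
        (v.1.1 = w.1.1 ++ [true] ∧ w.1.2 = 2 ∧ v.1.2 = 0))) := by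
  simp only [treegadget, SimpleGraph.fromRel_adj, ne_eq]
  rw [show v = w ↔ v.1 = w.1 from Subtype.ext_iff]

lemma mkColor_proper (l r : BTree) (cl : TGVertex l → Fin 3) (cr : TGVertex r → Fin 3)
    (tri : Fin 3 → Fin 3)
    (hl : ∀ v w, (treegadget l).Adj v w → cl v ≠ cl w)
    (hr : ∀ v w, (treegadget r).Adj v w → cr v ≠ cr w)
    (hinj : Function.Injective tri)
    (hx : tri 1 ≠ cl (TGroot l)) (hy : tri 2 ≠ cr (TGroot r)) :
    ∀ v w, (treegadget (BTree.node l r)).Adj v w →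
      mkColor l r cl cr tri v ≠ mkColor l r cl cr tri w := by
  have key : ∀ v w : TGVertex (BTree.node l r), v.1 ≠ w.1 →
      (v.1.1 = w.1.1 ∨
        (w.1.1 = v.1.1 ++ [false] ∧ v.1.2 = 1 ∧ w.1.2 = 0) ∨
        (w.1.1 = v.1.1 ++ [true] ∧ v.1.2 = 2 ∧ w.1.2 = 0)) →
      mkColor l r cl cr tri v ≠ mkColor l r cl cr tri w := by
    rintro ⟨⟨pv, kv⟩, hv⟩ ⟨⟨pw, kw⟩, hw⟩ hne hrel
    match pv, pw, hv, hw, hne, hrel with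
    | [], [], hv, hw, hne, Or.inl _ =>
        exact fun h => hne (Prod.ext_iff.2 ⟨rfl, hinj h⟩)
    | [], [], hv, hw, hne, Or.inr (Or.inl ⟨h, _⟩) => exact absurd h (by simp)
    | [], [], hv, hw, hne, Or.inr (Or.inr ⟨h, _⟩) => exact absurd h (by simp)
    | [], b :: p, hv, hw, hne, Or.inl h => exact absurd h (by simp)
    | b :: p, [], hv, hw, hne, Or.inl h => exact absurd h (by simp)
    | b :: p, [], hv, hw, hne, Or.inr (Or.inl ⟨h, _⟩) => exact absurd h (by simp)
    | b :: p, [], hv, hw, hne, Or.inr (Or.inr ⟨h, _⟩) => exact absurd h (by simp)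
    | [], b :: p, hv, hw, hne, Or.inr (Or.inl ⟨h, h1, h0⟩) =>
        -- b::p = [false], so b = false, p = []
        obtain ⟨hb, hp⟩ : b = false ∧ p = [] := by simpa using h
        subst hb hp h1 h0
        simpa [mkColor, TGroot] using hx
    | [], b :: p, hv, hw, hne, Or.inr (Or.inr ⟨h, h2, h0⟩) =>
        obtain ⟨hb, hp⟩ : b = true ∧ p = [] := by simpa using h
        subst hb hp h2 h0
        simpa [mkColor, TGroot] using hy
    | false :: p, false :: q, hv, hw, hne, hrel =>
        have hne' : ((p, kv) : List Bool × Fin 3) ≠ (q, kw) := by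
          simp only [Prod.ext_iff, List.cons.injEq, ne_eq] at hne ⊢; tauto
        have hrel' : p = q ∨ (q = p ++ [false] ∧ kv = 1 ∧ kw = 0) ∨
            (q = p ++ [true] ∧ kv = 2 ∧ kw = 0) := by
          simpa using hrel
        exact hl ⟨(p, kv), hv⟩ ⟨(q, kw), hw⟩
          ((tgadj l _ _).2 ⟨by simpa using hne', Or.inl hrel'⟩)
    | true :: p, true :: q, hv, hw, hne, hrel =>
        have hne' : ((p, kv) : List Bool × Fin 3) ≠ (q, kw) := by
          simp only [Prod.ext_iff, List.cons.injEq, ne_eq] at hne ⊢; tauto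
        have hrel' : p = q ∨ (q = p ++ [false] ∧ kv = 1 ∧ kw = 0) ∨
            (q = p ++ [true] ∧ kv = 2 ∧ kw = 0) := by
          simpa using hrel
        exact hr ⟨(p, kv), hv⟩ ⟨(q, kw), hw⟩
          ((tgadj r _ _).2 ⟨by simpa using hne', Or.inl hrel'⟩)
    | false :: p, true :: q, hv, hw, hne, hrel => exact absurd hrel (by simp)
    | true :: p, false :: q, hv, hw, hne, hrel => exact absurd hrel (by simp)
  intro v w hadj
  rw [tgadj] at hadj
  obtain ⟨hne, hrel | hrel⟩ := hadj
  · exact key v w hne hrel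
  · exact (key w v (Ne.symm hne) hrel).symm
lemma exists_third : ∀ a b : Fin 3, ∃ d : Fin 3, d ≠ a ∧ d ≠ b := by decide

lemma leaf_pushL (l r : BTree) (v : TGVertex l) :
    IsTGLeaf l v ↔ IsTGLeaf (BTree.node l r) (pushL l r v) := Iff.rfl

lemma leaf_pushR (l r : BTree) (v : TGVertex r) :
    IsTGLeaf r v ↔ IsTGLeaf (BTree.node l r) (pushR l r v) := Iff.rfl

lemma adj_pushL (l r : BTree) (v w : TGVertex l) (h : (treegadget l).Adj v w) :
    (treegadget (BTree.node l r)).Adj (pushL l r v) (pushL l r w) := by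
  rw [tgadj] at h ⊢
  obtain ⟨hne, hrel⟩ := h
  refine ⟨by simp [pushL, Prod.ext_iff] at hne ⊢; tauto, ?_⟩
  simpa [pushL] using hrel

lemma adj_pushR (l r : BTree) (v w : TGVertex r) (h : (treegadget r).Adj v w) :
    (treegadget (BTree.node l r)).Adj (pushR l r v) (pushR l r w) := by
  rw [tgadj] at h ⊢
  obtain ⟨hne, hrel⟩ := h
  refine ⟨by simp [pushR, Prod.ext_iff] at hne ⊢; tauto, ?_⟩
  simpa [pushR] using hrel

lemma mkColor_ext (l r : BTree) (cl : TGVertex l → Fin 3) (cr : TGVertex r → Fin 3)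
    (tri : Fin 3 → Fin 3) (c' : TGVertex (BTree.node l r) → Fin 3)
    (hel : ∀ v, IsTGLeaf l v → cl v = c' (pushL l r v))
    (her : ∀ v, IsTGLeaf r v → cr v = c' (pushR l r v)) :
    ∀ v, IsTGLeaf (BTree.node l r) v → mkColor l r cl cr tri v = c' v := by
  rintro ⟨⟨p, k⟩, h⟩ ⟨hleaf, hk⟩
  match p, h, hleaf with
  | [], h, hleaf => simp [BTree.subtree] at hleaf
  | false :: p, h, hleaf => exact hel ⟨(p, k), h⟩ ⟨hleaf, hk⟩
  | true :: p, h, hleaf => exact her ⟨(p, k), h⟩ ⟨hleaf, hk⟩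
lemma tri1 : ∀ a b : Fin 3, ∃ f : Fin 3 → Fin 3, Function.Injective f ∧ f 1 ≠ a ∧ f 2 ≠ b := by
  decide

lemma tri2 : ∀ i a b : Fin 3, a ≠ i ∨ b ≠ i →
    ∃ f : Fin 3 → Fin 3, Function.Injective f ∧ f 1 ≠ a ∧ f 2 ≠ b ∧ f 0 ≠ i := by
  decide

theorem treegadget_extend_leaf_coloring (t : BTree) (c' : TGVertex t → Fin 3)
    (hc' : ∀ v w, IsTGLeaf t v → IsTGLeaf t w → (treegadget t).Adj v w → c' v ≠ c' w) :
    (∃ c : TGVertex t → Fin 3,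
        (∀ v w, (treegadget t).Adj v w → c v ≠ c w) ∧
        (∀ v, IsTGLeaf t v → c v = c' v)) ∧
    (∀ i : Fin 3, (∃ v, IsTGLeaf t v ∧ c' v = i) →
      ∃ c : TGVertex t → Fin 3,
        (∀ v w, (treegadget t).Adj v w → c v ≠ c w) ∧
        (∀ v, IsTGLeaf t v → c v = c' v) ∧
        c (TGroot t) ≠ i) := by
  induction t with
  | leaf =>
    have pos_nil : ∀ v : TGVertex BTree.leaf, v.1.1 = [] := by
      rintro ⟨⟨_ | ⟨a, q⟩, k⟩, h⟩
      · rfl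
      · simp [BTree.subtree] at h
    have classify : ∀ v : TGVertex BTree.leaf,
        v = TGroot BTree.leaf ∨ v = ⟨([], 1), rfl⟩ ∨ v = ⟨([], 2), rfl⟩ := by
      rintro ⟨⟨p, k⟩, h⟩
      have hp : p = [] := pos_nil ⟨⟨p, k⟩, h⟩
      subst hp
      fin_cases k
      · exact Or.inl rfl
      · exact Or.inr (Or.inl rfl)
      · exact Or.inr (Or.inr rfl)
    set x : TGVertex BTree.leaf := ⟨([], 1), rfl⟩ with hx
    set y : TGVertex BTree.leaf := ⟨([], 2), rfl⟩ with hy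
    have hlx : IsTGLeaf BTree.leaf x := ⟨rfl, by decide⟩
    have hly : IsTGLeaf BTree.leaf y := ⟨rfl, by decide⟩
    have hxy : c' x ≠ c' y := by
      refine hc' x y hlx hly ?_
      rw [tgadj]
      exact ⟨by decide, Or.inl (Or.inl rfl)⟩
    obtain ⟨d, hd1, hd2⟩ := exists_third (c' x) (c' y)
    set c : TGVertex BTree.leaf → Fin 3 := fun v => if v.1.2 = 0 then d else c' v with hc
    have hext : ∀ v, IsTGLeaf BTree.leaf v → c v = c' v := by
      intro v hv
      simp [hc, hv.2]
    have hroot : c (TGroot BTree.leaf) = d := rfl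
    have hprop : ∀ v w, (treegadget BTree.leaf).Adj v w → c v ≠ c w := by
      intro v w hadj
      have hne : v ≠ w := hadj.ne
      rcases classify v with hv | hv | hv <;> rcases classify w with hw | hw | hw <;>
        subst hv hw <;> first
        | exact absurd rfl hne
        | simpa [hc, TGroot, hx, hy] using hd1
        | simpa [hc, TGroot, hx, hy] using hd2
        | simpa [hc, TGroot, hx, hy] using hd1.symm
        | simpa [hc, TGroot, hx, hy] using hd2.symm
        | simpa [hc, TGroot, hx, hy] using hxy
        | simpa [hc, TGroot, hx, hy] using hxy.symm
    refine ⟨⟨c, hprop, hext⟩, ?_⟩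
    rintro i ⟨v, hv, hvi⟩
    refine ⟨c, hprop, hext, ?_⟩
    rw [hroot]
    rcases classify v with h | h | h
    · exact absurd (by rw [h]; rfl : v.1.2 = 0) hv.2
    · subst h; rw [← hvi]; exact hd1
    · subst h; rw [← hvi]; exact hd2
  | node l r ihl ihr =>
    have hcl' : ∀ v w, IsTGLeaf l v → IsTGLeaf l w → (treegadget l).Adj v w →
        c' (pushL l r v) ≠ c' (pushL l r w) := fun v w lv lw hadj =>
      hc' _ _ ((leaf_pushL l r v).1 lv) ((leaf_pushL l r w).1 lw) (adj_pushL l r v w hadj)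
    have hcr' : ∀ v w, IsTGLeaf r v → IsTGLeaf r w → (treegadget r).Adj v w →
        c' (pushR l r v) ≠ c' (pushR l r w) := fun v w lv lw hadj =>
      hc' _ _ ((leaf_pushR l r v).1 lv) ((leaf_pushR l r w).1 lw) (adj_pushR l r v w hadj)
    obtain ⟨⟨cl, hpl, hel⟩, hl2⟩ := ihl (fun v => c' (pushL l r v)) hcl'
    obtain ⟨⟨cr, hpr, her⟩, hr2⟩ := ihr (fun v => c' (pushR l r v)) hcr'
    constructor
    · obtain ⟨tri, htinj, htx, hty⟩ := tri1 (cl (TGroot l)) (cr (TGroot r))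
      exact ⟨mkColor l r cl cr tri,
        mkColor_proper l r cl cr tri hpl hpr htinj htx hty,
        mkColor_ext l r cl cr tri c' hel her⟩
    · rintro i ⟨⟨⟨p, k⟩, h⟩, hleaf, hvi⟩
      match p, h, hleaf, hvi with
      | [], h, hleaf, hvi => simp [IsTGLeaf, BTree.subtree] at hleaf
      | false :: p, h, hleaf, hvi =>
        obtain ⟨cl2, hpl2, hel2, hroot2⟩ :=
          hl2 i ⟨⟨(p, k), h⟩, ⟨hleaf.1, hleaf.2⟩, hvi⟩
        obtain ⟨tri, htinj, htx, hty, ht0⟩ :=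
          tri2 i (cl2 (TGroot l)) (cr (TGroot r)) (Or.inl hroot2)
        exact ⟨mkColor l r cl2 cr tri,
          mkColor_proper l r cl2 cr tri hpl2 hpr htinj htx hty,
          mkColor_ext l r cl2 cr tri c' hel2 her, ht0⟩
      | true :: p, h, hleaf, hvi =>
        obtain ⟨cr2, hpr2, her2, hroot2⟩ :=
          hr2 i ⟨⟨(p, k), h⟩, ⟨hleaf.1, hleaf.2⟩, hvi⟩
        obtain ⟨tri, htinj, htx, hty, ht0⟩ :=
          tri2 i (cl (TGroot l)) (cr2 (TGroot r)) (Or.inr hroot2)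
        exact ⟨mkColor l r cl cr2 tri,
          mkColor_proper l r cl cr2 tri hpl hpr2 htinj htx hty,
          mkColor_ext l r cl cr2 tri c' hel her2, ht0⟩
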